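/- Let q and m be positive integers and let 𝓛 be a set of vectors ½(a_1,…,a_m) with all a_j odd integers, such that for all h ∈ ℤ^m a vector μ (with odd coordinates times ½) lies in 𝓛 if and only if μ + q·h lies in 𝓛. Call μ = ½(a_1,…,a_m) q-reduced if |a_j| < 2q for all j, and let N^red_𝓛(ε,k) be the number of q-reduced μ ∈ 𝓛 with ‖μ‖₁ = k + m/2 and R(μ) ≡ ε (mod 2). Then for every ε ∈ {0,1} and every integer k ≥ 0: N_𝓛(ε,k) = Σ_{β=0}^{⌊k/q⌋} C(β+m−1, m−1) · N^red_𝓛(ε, k−βq). -/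

import Mathlib

namespace LensAux

def tC (q : ℕ) (a : ℤ) : ℕ := a.natAbs / (2 * q)

def rC (q : ℕ) (a : ℤ) : ℤ := a.sign * ((a.natAbs % (2 * q) : ℕ) : ℤ)

def psiC (q : ℕ) (r : ℤ) (t : ℕ) : ℤ := r + r.sign * (2 * (q : ℤ) * t)

variable {q : ℕ} {a r : ℤ} {t : ℕ}

lemma ne_zero_of_odd (ha : Odd a) : a ≠ 0 := by
  rintro rfl; exact (Int.not_odd_iff_even.mpr Even.zero) ha

lemma natAbs_mod_odd (ha : Odd a) : Odd (a.natAbs % (2 * q)) := by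
  have h1 : Odd a.natAbs := Int.natAbs_odd.mpr ha
  have h2 : a.natAbs % (2 * q) % 2 = a.natAbs % 2 := Nat.mod_mod_of_dvd _ ⟨q, rfl⟩
  rw [Nat.odd_iff] at h1 ⊢
  rw [h2, h1]

lemma natAbs_mod_pos (ha : Odd a) : 0 < a.natAbs % (2 * q) :=
  Nat.pos_of_ne_zero (by
    intro h
    have := natAbs_mod_odd (q := q) (a := a) ha
    rw [h] at this
    simp at this)

lemma sign_rC (ha : Odd a) : (rC q a).sign = a.sign := by
  have hpos : (0:ℤ) < ((a.natAbs % (2 * q) : ℕ) : ℤ) := by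
    exact_mod_cast natAbs_mod_pos ha
  rw [rC, Int.sign_mul, Int.sign_sign, (Int.sign_eq_one_iff_pos).mpr hpos, mul_one]

lemma natAbs_rC (ha : Odd a) : (rC q a).natAbs = a.natAbs % (2 * q) := by
  rw [rC, Int.natAbs_mul, Int.natAbs_sign_of_ne_zero (ne_zero_of_odd ha), one_mul,
    Int.natAbs_natCast]

lemma odd_rC (ha : Odd a) : Odd (rC q a) := by
  rw [← Int.natAbs_odd, natAbs_rC ha]
  exact natAbs_mod_odd ha

lemma rC_neg_iff (ha : Odd a) : rC q a < 0 ↔ a < 0 := by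
  rw [← Int.sign_eq_neg_one_iff_neg, ← Int.sign_eq_neg_one_iff_neg, sign_rC ha]

lemma natAbs_rC_lt (hq : 0 < q) (ha : Odd a) : (rC q a).natAbs < 2 * q := by
  rw [natAbs_rC ha]
  exact Nat.mod_lt _ (by positivity)

lemma psiC_rC_tC (ha : Odd a) : psiC q (rC q a) (tC q a) = a := by
  have h1 : (rC q a).sign = a.sign := sign_rC ha
  have h2 : (a.natAbs % (2 * q) + 2 * q * (a.natAbs / (2 * q)) : ℕ) = a.natAbs :=
    Nat.mod_add_div _ _
  have h3 : a.sign * (a.natAbs : ℤ) = a := Int.sign_mul_natAbs a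
  rw [psiC, h1, rC, tC]
  calc a.sign * ((a.natAbs % (2 * q) : ℕ) : ℤ) + a.sign * (2 * (q:ℤ) * (a.natAbs / (2*q) : ℕ))
      = a.sign * (((a.natAbs % (2 * q) + 2 * q * (a.natAbs / (2 * q)) : ℕ) : ℤ)) := by
        push_cast; ring
    _ = a := by rw [h2, h3]

lemma psiC_eq (hr : r ≠ 0) : psiC q r t = r.sign * ((r.natAbs + 2 * q * t : ℕ) : ℤ) := by
  have h3 : r.sign * (r.natAbs : ℤ) = r := Int.sign_mul_natAbs r
  rw [psiC]
  nth_rewrite 1 [← h3]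
  push_cast; ring

lemma natAbs_psiC (hr : r ≠ 0) : (psiC q r t).natAbs = r.natAbs + 2 * q * t := by
  rw [psiC_eq hr, Int.natAbs_mul, Int.natAbs_sign_of_ne_zero hr, one_mul, Int.natAbs_natCast]

lemma sign_psiC (hr : r ≠ 0) : (psiC q r t).sign = r.sign := by
  have hpos : (0:ℤ) < ((r.natAbs + 2 * q * t : ℕ) : ℤ) := by
    have : 0 < r.natAbs := Int.natAbs_pos.mpr hr
    positivity
  rw [psiC_eq hr, Int.sign_mul, Int.sign_sign, (Int.sign_eq_one_iff_pos).mpr hpos, mul_one]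

lemma psiC_neg_iff (hr : r ≠ 0) : psiC q r t < 0 ↔ r < 0 := by
  rw [← Int.sign_eq_neg_one_iff_neg, ← Int.sign_eq_neg_one_iff_neg, sign_psiC hr]

lemma odd_psiC (hr : Odd r) : Odd (psiC q r t) := by
  have h2 : Even (2 * (q:ℤ) * t) := ⟨(q:ℤ) * t, by ring⟩
  exact hr.add_even (h2.mul_left _)

lemma rC_psiC (hr : r ≠ 0) (hlt : r.natAbs < 2 * q) : rC q (psiC q r t) = r := by
  have h3 : r.sign * (r.natAbs : ℤ) = r := Int.sign_mul_natAbs r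
  rw [rC, sign_psiC hr, natAbs_psiC hr, Nat.add_mul_mod_self_left, Nat.mod_eq_of_lt hlt, h3]

lemma tC_psiC (hq : 0 < q) (hr : r ≠ 0) (hlt : r.natAbs < 2 * q) : tC q (psiC q r t) = t := by
  rw [tC, natAbs_psiC hr, Nat.add_mul_div_left _ _ (by positivity), Nat.div_eq_of_lt hlt, zero_add]

lemma abs_psiC (hr : r ≠ 0) : |psiC q r t| = |r| + 2 * (q:ℤ) * t := by
  rw [Int.abs_eq_natAbs, natAbs_psiC hr, Int.abs_eq_natAbs]; push_cast; ring

lemma abs_decomp (ha : Odd a) : |a| = |rC q a| + 2 * (q:ℤ) * (tC q a) := by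
  have := abs_psiC (q := q) (r := rC q a) (t := tC q a) (ne_zero_of_odd (odd_rC ha))
  rw [psiC_rC_tC ha] at this
  exact this

lemma card_tuples (m β : ℕ) (hm : 0 < m) :
    (Finset.Nat.antidiagonalTuple m β).card = (β + m - 1).choose (m - 1) := by
  classical
  have key : ∀ t : Fin m → ℕ,
      Multiset.card (Multiset.toFinsupp.symm.toEquiv (Finsupp.equivFunOnFinite.symm t))
        = ∑ i, t i := by
    intro t
    show Multiset.card (Finsupp.toMultiset (Finsupp.equivFunOnFinite.symm t)) = _
    rw [Finsupp.card_toMultiset, Finsupp.sum_fintype _ _ (fun _ => rfl)]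
    simp
  have e : ↥(Finset.Nat.antidiagonalTuple m β) ≃ Sym (Fin m) β :=
    (Equiv.subtypeEquivRight fun t => Finset.Nat.mem_antidiagonalTuple).trans
      (Equiv.subtypeEquiv
        (Finsupp.equivFunOnFinite.symm.trans Multiset.toFinsupp.symm.toEquiv)
        (fun t => by rw [Equiv.trans_apply, ← key t]))
  rw [← Fintype.card_coe, Fintype.card_congr e, Sym.card_sym_eq_choose, Fintype.card_fin]
  have h2 : β + m - 1 = m + β - 1 := by omega
  have h3 : m - 1 = (m + β - 1) - β := by omega
  rw [h2, h3, Nat.choose_symm (by omega)]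

end LensAux



/-- `R(μ)`: the number of negative entries of `μ = ½(a_1,…,a_m)`. -/
def negCount {m : ℕ} (a : Fin m → ℤ) : ℕ :=
  (Finset.univ.filter fun j => a j < 0).card

/-- `N_𝓛(ε,k)`: the number of `μ = ½(a_1,…,a_m) ∈ 𝓛` with one-norm
`‖μ‖₁ = ½∑|a_j| = k + m/2` (i.e. `∑|a_j| = 2k + m`) and `R(μ) ≡ ε (mod 2)`. -/
noncomputable def Ncount {m : ℕ} (L : Set (Fin m → ℤ)) (ε k : ℕ) : ℕ :=
  Set.ncard {a | a ∈ L ∧ (∑ j, |a j|) = 2 * (k : ℤ) + m ∧ negCount a % 2 = ε}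

/-- `N^red_𝓛(ε,k)`: the number of `q`-reduced `μ = ½(a_1,…,a_m) ∈ 𝓛` (i.e. `|a_j| < 2q`
for all `j`) with `‖μ‖₁ = k + m/2` and `R(μ) ≡ ε (mod 2)`. -/
noncomputable def NcountRed (q : ℕ) {m : ℕ} (L : Set (Fin m → ℤ)) (ε k : ℕ) : ℕ :=
  Set.ncard {a | a ∈ L ∧ (∀ j, |a j| < 2 * (q : ℤ)) ∧
    (∑ j, |a j|) = 2 * (k : ℤ) + m ∧ negCount a % 2 = ε}

lemma negCount_congr {m : ℕ} {a b : Fin m → ℤ} (h : ∀ j, a j < 0 ↔ b j < 0) :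
    negCount a = negCount b := by
  unfold negCount
  congr 1
  exact Finset.filter_congr (fun j _ => h j)

theorem Ncount_eq_sum_NcountRed (q m : ℕ) (hq : 0 < q) (hm : 0 < m)
    (L : Set (Fin m → ℤ))
    (hodd : ∀ a ∈ L, ∀ j, Odd (a j))
    (hinv : ∀ (a h : Fin m → ℤ), (∀ j, Odd (a j)) →
      (a ∈ L ↔ (fun j => a j + 2 * (q : ℤ) * h j) ∈ L))
    (ε k : ℕ) (hε : ε = 0 ∨ ε = 1) :
    Ncount L ε k =
      ∑ β ∈ Finset.range (k / q + 1),
        Nat.choose (β + m - 1) (m - 1) * NcountRed q L ε (k - β * q) := by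
  classical
  -- the sets involved
  set S : Set (Fin m → ℤ) :=
    {a | a ∈ L ∧ (∑ j, |a j|) = 2 * (k : ℤ) + m ∧ negCount a % 2 = ε} with hSdef
  set RedS : ℕ → Set (Fin m → ℤ) := fun c =>
    {a | a ∈ L ∧ (∀ j, |a j| < 2 * (q : ℤ)) ∧
      (∑ j, |a j|) = 2 * (c : ℤ) + m ∧ negCount a % 2 = ε} with hRdef
  set T : Set ((Fin m → ℤ) × (Fin m → ℕ)) :=
    {p | p.1 ∈ L ∧ (∀ j, |p.1 j| < 2 * (q : ℤ)) ∧
      (∑ j, |p.1 j|) + 2 * (q:ℤ) * (∑ j, (p.2 j : ℤ)) = 2 * (k : ℤ) + m ∧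
      negCount p.1 % 2 = ε} with hTdef
  set Ψ : (Fin m → ℤ) × (Fin m → ℕ) → (Fin m → ℤ) :=
    fun p => fun j => LensAux.psiC q (p.1 j) (p.2 j) with hΨdef
  -- Ψ maps T into S
  have hΨmem : ∀ p ∈ T, Ψ p ∈ S := by
    rintro ⟨r, t⟩ ⟨hL, hlt, hsum, hpar⟩
    have hro : ∀ j, Odd (r j) := hodd r hL
    have hrne : ∀ j, r j ≠ 0 := fun j => LensAux.ne_zero_of_odd (hro j)
    refine ⟨?_, ?_, ?_⟩
    · have := (hinv r (fun j => (r j).sign * (t j : ℤ)) hro).mp hL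
      have heq : (fun j => r j + 2 * (q:ℤ) * ((r j).sign * (t j : ℤ)))
          = Ψ (r, t) := by
        funext j; simp only [hΨdef, LensAux.psiC]; ring
      rwa [heq] at this
    · have : ∀ j, |Ψ (r, t) j| = |r j| + 2 * (q:ℤ) * (t j : ℤ) := fun j =>
        LensAux.abs_psiC (hrne j)
      calc ∑ j, |Ψ (r, t) j| = ∑ j, (|r j| + 2 * (q:ℤ) * (t j : ℤ)) :=
            Finset.sum_congr rfl (fun j _ => this j)
        _ = (∑ j, |r j|) + 2 * (q:ℤ) * (∑ j, (t j : ℤ)) := by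
            rw [Finset.sum_add_distrib, Finset.mul_sum]
        _ = 2 * (k : ℤ) + m := hsum
    · have : negCount (Ψ (r, t)) = negCount r :=
        negCount_congr (fun j => LensAux.psiC_neg_iff (hrne j))
      rw [this]; exact hpar
  -- image equality
  have hA : S = Ψ '' T := by
    apply Set.Subset.antisymm
    · rintro a ⟨hL, hsum, hpar⟩
      have hao : ∀ j, Odd (a j) := hodd a hL
      refine ⟨(fun j => LensAux.rC q (a j), fun j => LensAux.tC q (a j)), ?_, ?_⟩
      · have hro : ∀ j, Odd (LensAux.rC q (a j)) := fun j => LensAux.odd_rC (hao j)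
        refine ⟨?_, ?_, ?_, ?_⟩
        · have := (hinv (fun j => LensAux.rC q (a j))
            (fun j => (a j).sign * (LensAux.tC q (a j) : ℤ)) hro).mpr
          apply this
          have heq : (fun j => LensAux.rC q (a j)
              + 2 * (q:ℤ) * ((a j).sign * (LensAux.tC q (a j) : ℤ))) = a := by
            funext j
            have := LensAux.psiC_rC_tC (q := q) (hao j)
            rw [LensAux.psiC, LensAux.sign_rC (hao j)] at this
            calc LensAux.rC q (a j) + 2 * (q:ℤ) * ((a j).sign * (LensAux.tC q (a j) : ℤ))
                = LensAux.rC q (a j) + (a j).sign * (2 * (q:ℤ) * (LensAux.tC q (a j) : ℤ)) := by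
                  ring
              _ = a j := this
          rwa [heq]
        · intro j
          have := LensAux.natAbs_rC_lt (q := q) hq (hao j)
          rw [Int.abs_eq_natAbs]
          exact_mod_cast this
        · have hdec : ∀ j, |a j| = |LensAux.rC q (a j)| + 2 * (q:ℤ) * (LensAux.tC q (a j) : ℤ) :=
            fun j => LensAux.abs_decomp (hao j)
          have : (∑ j, |LensAux.rC q (a j)|) + 2 * (q:ℤ) * (∑ j, ((LensAux.tC q (a j) : ℕ) : ℤ))
              = ∑ j, |a j| := by
            rw [Finset.mul_sum, ← Finset.sum_add_distrib]
            exact Finset.sum_congr rfl (fun j _ => (hdec j).symm)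
          rw [this, hsum]
        · have : negCount (fun j => LensAux.rC q (a j)) = negCount a :=
            negCount_congr (fun j => LensAux.rC_neg_iff (hao j))
          rw [this]; exact hpar
      · funext j
        exact LensAux.psiC_rC_tC (hao j)
    · rintro x ⟨p, hp, rfl⟩
      exact hΨmem p hp
  -- injectivity on T
  have hinj : Set.InjOn Ψ T := by
    have hleft : ∀ p ∈ T, (fun j => LensAux.rC q (Ψ p j), fun j => LensAux.tC q (Ψ p j)) = p := by
      rintro ⟨r, t⟩ ⟨hL, hlt, -, -⟩
      have hro : ∀ j, Odd (r j) := hodd r hL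
      have hrne : ∀ j, r j ≠ 0 := fun j => LensAux.ne_zero_of_odd (hro j)
      have hltn : ∀ j, (r j).natAbs < 2 * q := by
        intro j
        have := hlt j
        rw [Int.abs_eq_natAbs] at this
        exact_mod_cast this
      refine Prod.ext ?_ ?_
      · funext j; exact LensAux.rC_psiC (hrne j) (hltn j)
      · funext j; exact LensAux.tC_psiC hq (hrne j) (hltn j)
    intro p hp p' hp' h
    rw [← hleft p hp, ← hleft p' hp', h]
  -- finiteness
  have hSfin : S.Finite := by
    apply Set.Finite.subset
      (Set.Finite.pi (fun _ : Fin m => Set.finite_Icc (-(2 * (k:ℤ) + m)) (2 * (k:ℤ) + m)))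
    rintro a ⟨-, hsum, -⟩
    intro j _
    have h1 : |a j| ≤ ∑ i, |a i| :=
      Finset.single_le_sum (fun i _ => abs_nonneg (a i)) (Finset.mem_univ j)
    rw [hsum] at h1
    exact ⟨neg_le_of_abs_le h1, le_of_abs_le h1⟩
  have hTfin : T.Finite := Set.Finite.of_finite_image (hA ▸ hSfin) hinj
  have hRfin : ∀ c : ℕ, (RedS c).Finite := by
    intro c
    apply Set.Finite.subset
      (Set.Finite.pi (fun _ : Fin m => Set.finite_Icc (-(2 * (q:ℤ))) (2 * (q:ℤ))))
    rintro a ⟨-, hlt, -, -⟩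
    intro j _
    exact ⟨neg_le_of_abs_le (le_of_lt (hlt j)), le_of_abs_le (le_of_lt (hlt j))⟩
  -- decomposition of T
  have hdecomp : hTfin.toFinset = (Finset.range (k / q + 1)).biUnion
      (fun β => (hRfin (k - β * q)).toFinset ×ˢ Finset.Nat.antidiagonalTuple m β) := by
    ext p
    simp only [Set.Finite.mem_toFinset, Finset.mem_biUnion, Finset.mem_range,
      Finset.mem_product, Finset.Nat.mem_antidiagonalTuple]
    constructor
    · rintro ⟨hL, hlt, hsum, hpar⟩
      have hm' : (m:ℤ) ≤ ∑ j, |p.1 j| := by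
        have h1 : ∀ j, (1:ℤ) ≤ |p.1 j| := fun j =>
          Int.one_le_abs (LensAux.ne_zero_of_odd (hodd _ hL j))
        calc (m:ℤ) = ∑ _j : Fin m, (1:ℤ) := by simp
          _ ≤ ∑ j, |p.1 j| := Finset.sum_le_sum (fun j _ => h1 j)
      have hcast : ((∑ j, p.2 j : ℕ) : ℤ) = ∑ j, (p.2 j : ℤ) := by push_cast; rfl
      have hβq : (∑ j, p.2 j) * q ≤ k := by
        have h2 : 2 * (q:ℤ) * ((∑ j, p.2 j : ℕ) : ℤ) ≤ 2 * k := by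
          rw [hcast]; linarith
        have h3 : (((∑ j, p.2 j) * q : ℕ) : ℤ) ≤ (k : ℤ) := by push_cast; nlinarith
        exact_mod_cast h3
      refine ⟨∑ j, p.2 j, Nat.lt_succ_of_le ((Nat.le_div_iff_mul_le hq).mpr hβq),
        ⟨hL, hlt, ?_, hpar⟩, rfl⟩
      rw [Nat.cast_sub hβq]
      push_cast
      rw [← hcast] at hsum
      push_cast at hsum
      linarith
    · rintro ⟨β, hβ, ⟨hL, hlt, hsum, hpar⟩, hts⟩
      have hβq : β * q ≤ k := (Nat.le_div_iff_mul_le hq).mp (Nat.lt_succ_iff.mp hβ)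
      refine ⟨hL, hlt, ?_, hpar⟩
      have hcast : ((k - β * q : ℕ) : ℤ) = (k : ℤ) - β * q := by
        push_cast [hβq]; ring
      have hts' : (∑ j, (p.2 j : ℤ)) = (β : ℤ) := by
        rw [← hts]; push_cast; rfl
      rw [hcast] at hsum
      rw [hts']
      push_cast at hsum ⊢
      linarith
  -- counting
  have hcardRed : ∀ c : ℕ, (hRfin c).toFinset.card = NcountRed q L ε c := by
    intro c
    rw [← Set.ncard_eq_toFinset_card (RedS c) (hRfin c)]
    rfl
  have hdisj : ∀ β ∈ Finset.range (k / q + 1), ∀ γ ∈ Finset.range (k / q + 1), β ≠ γ →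
      Disjoint ((hRfin (k - β * q)).toFinset ×ˢ Finset.Nat.antidiagonalTuple m β)
        ((hRfin (k - γ * q)).toFinset ×ˢ Finset.Nat.antidiagonalTuple m γ) := by
    intro β _ γ _ hne
    rw [Finset.disjoint_left]
    rintro p hp hp'
    rw [Finset.mem_product, Finset.Nat.mem_antidiagonalTuple] at hp hp'
    exact hne (hp.2.symm.trans hp'.2)
  calc Ncount L ε k = S.ncard := rfl
    _ = (Ψ '' T).ncard := by rw [hA]
    _ = T.ncard := Set.ncard_image_of_injOn hinj
    _ = hTfin.toFinset.card := Set.ncard_eq_toFinset_card T hTfin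
    _ = ∑ β ∈ Finset.range (k / q + 1),
        ((hRfin (k - β * q)).toFinset ×ˢ Finset.Nat.antidiagonalTuple m β).card := by
        rw [hdecomp]; exact Finset.card_biUnion hdisj
    _ = ∑ β ∈ Finset.range (k / q + 1),
        Nat.choose (β + m - 1) (m - 1) * NcountRed q L ε (k - β * q) := by
        refine Finset.sum_congr rfl (fun β _ => ?_)
        rw [Finset.card_product, LensAux.card_tuples m β hm, hcardRed, mul_comm]
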